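/- If Λ₁ and Λ₂ are A↛B semicausal channels on the bipartite system A × B, then their composition Λ₁ ∘ Λ₂ is also an A↛B semicausal channel (the A↛B semicausal channels form a semigroup under composition). -/

import Mathlib

open Matrix BigOperators
open scoped Kronecker ComplexOrder

noncomputable section

/-- Partial trace over the `A` factor. -/
def trA {A B : Type*} [Fintype A] (ρ : Matrix (A × B) (A × B) ℂ) : Matrix B B ℂ :=
  Matrix.of fun b b' => ∑ a, ρ (a, b) (a, b')

/-- Partial trace over the `B` factor. -/
def trB {A B : Type*} [Fintype B] (ρ : Matrix (A × B) (A × B) ℂ) : Matrix A A ℂ :=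
  Matrix.of fun a a' => ∑ b, ρ (a, b) (a', b)

/-- A state: positive semidefinite matrix of trace 1. -/
def IsState {n : Type*} [Fintype n] (ρ : Matrix n n ℂ) : Prop :=
  ρ.PosSemidef ∧ ρ.trace = 1

/-- A channel: a map admitting a Kraus representation `Λ[X] = ∑ i, K i * X * (K i)ᴴ`
with `∑ i, (K i)ᴴ * K i = 1` (completely positive and trace-preserving). -/
def IsChannel {n : Type*} [Fintype n] [DecidableEq n]
    (Λ : Matrix n n ℂ → Matrix n n ℂ) : Prop :=
  ∃ (m : ℕ) (K : Fin m → Matrix n n ℂ),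
    (∀ X, Λ X = ∑ i, K i * X * (K i)ᴴ) ∧ (∑ i, (K i)ᴴ * K i = 1)

/-- The induced map `Γ ⊗ id` on the bipartite system, acting blockwise. -/
def tensIdA {A B : Type*} (Γ : Matrix A A ℂ → Matrix A A ℂ)
    (ρ : Matrix (A × B) (A × B) ℂ) : Matrix (A × B) (A × B) ℂ :=
  Matrix.of fun p q => Γ (Matrix.of fun a a' => ρ (a, p.2) (a', q.2)) p.1 q.1

/-- The induced map `id ⊗ Γ` on the bipartite system, acting blockwise. -/
def tensIdB {A B : Type*} (Γ : Matrix B B ℂ → Matrix B B ℂ)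
    (ρ : Matrix (A × B) (A × B) ℂ) : Matrix (A × B) (A × B) ℂ :=
  Matrix.of fun p q => Γ (Matrix.of fun b b' => ρ (p.1, b) (q.1, b')) p.2 q.2

/-- `Λ` is A↛B semicausal: no channel applied by Alice beforehand affects Bob's
reduced output state. -/
def SemicausalAtoB {A B : Type*} [Fintype A] [Fintype B] [DecidableEq A]
    (Λ : Matrix (A × B) (A × B) ℂ → Matrix (A × B) (A × B) ℂ) : Prop :=
  ∀ ρ : Matrix (A × B) (A × B) ℂ, IsState ρ →
    ∀ Γ : Matrix A A ℂ → Matrix A A ℂ, IsChannel Γ →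
      trA (Λ (tensIdA Γ ρ)) = trA (Λ ρ)

/-- `Λ` is A↚B semicausal: no channel applied by Bob beforehand affects Alice's
reduced output state. -/
def SemicausalBtoA {A B : Type*} [Fintype A] [Fintype B] [DecidableEq B]
    (Λ : Matrix (A × B) (A × B) ℂ → Matrix (A × B) (A × B) ℂ) : Prop :=
  ∀ ρ : Matrix (A × B) (A × B) ℂ, IsState ρ →
    ∀ Γ : Matrix B B ℂ → Matrix B B ℂ, IsChannel Γ →
      trB (Λ (tensIdB Γ ρ)) = trB (Λ ρ)

/-- `Λ` is causal: both A↛B and A↚B semicausal. -/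
def Causal {A B : Type*} [Fintype A] [Fintype B] [DecidableEq A] [DecidableEq B]
    (Λ : Matrix (A × B) (A × B) ℂ → Matrix (A × B) (A × B) ℂ) : Prop :=
  SemicausalAtoB Λ ∧ SemicausalBtoA Λ


section AuxiliaryLemmas

set_option linter.unusedSectionVars false

lemma isChannel_comp' {n : Type*} [Fintype n] [DecidableEq n]
    {Λ₁ Λ₂ : Matrix n n ℂ → Matrix n n ℂ} (h1 : IsChannel Λ₁) (h2 : IsChannel Λ₂) :
    IsChannel (Λ₁ ∘ Λ₂) := by
  obtain ⟨m₁, K₁, hK₁, hs₁⟩ := h1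
  obtain ⟨m₂, K₂, hK₂, hs₂⟩ := h2
  refine ⟨m₁ * m₂, fun i => K₁ (finProdFinEquiv.symm i).1 * K₂ (finProdFinEquiv.symm i).2, ?_, ?_⟩
  · intro X
    rw [Function.comp_apply, hK₁, hK₂,
      ← finProdFinEquiv.sum_comp
        (fun i => (K₁ (finProdFinEquiv.symm i).1 * K₂ (finProdFinEquiv.symm i).2) * X *
          (K₁ (finProdFinEquiv.symm i).1 * K₂ (finProdFinEquiv.symm i).2)ᴴ)]
    simp only [Equiv.symm_apply_apply]
    rw [Fintype.sum_prod_type]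
    simp [Finset.mul_sum, Finset.sum_mul, conjTranspose_mul, mul_assoc]
  · rw [← finProdFinEquiv.sum_comp
        (fun i => (K₁ (finProdFinEquiv.symm i).1 * K₂ (finProdFinEquiv.symm i).2)ᴴ *
          (K₁ (finProdFinEquiv.symm i).1 * K₂ (finProdFinEquiv.symm i).2))]
    simp only [Equiv.symm_apply_apply]
    rw [Fintype.sum_prod_type_right]
    calc ∑ j : Fin m₂, ∑ i : Fin m₁, (K₁ i * K₂ j)ᴴ * (K₁ i * K₂ j)
        = ∑ j : Fin m₂, (K₂ j)ᴴ * (∑ i, (K₁ i)ᴴ * K₁ i) * K₂ j := by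
          simp [Finset.mul_sum, Finset.sum_mul, conjTranspose_mul, mul_assoc]
      _ = 1 := by rw [hs₁]; simpa using hs₂

lemma isState_channel' {n : Type*} [Fintype n] [DecidableEq n]
    {Λ : Matrix n n ℂ → Matrix n n ℂ} (hΛ : IsChannel Λ)
    {ρ : Matrix n n ℂ} (hρ : IsState ρ) : IsState (Λ ρ) := by
  obtain ⟨m, K, hK, hs⟩ := hΛ
  rw [hK]
  constructor
  · exact Finset.sum_induction _ _ (fun a b => Matrix.PosSemidef.add) Matrix.PosSemidef.zero
      (fun i _ => hρ.1.mul_mul_conjTranspose_same (K i))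
  · rw [Matrix.trace_sum]
    calc ∑ i, ((K i) * ρ * (K i)ᴴ).trace = ∑ i, ((K i)ᴴ * (K i) * ρ).trace := by
          refine Finset.sum_congr rfl fun i _ => ?_
          rw [Matrix.trace_mul_cycle, mul_assoc]
      _ = 1 := by
          rw [← Matrix.trace_sum]
          simp_rw [← Finset.sum_mul, hs, one_mul, hρ.2]

variable {A B : Type*} [Fintype A] [Fintype B] [DecidableEq A] [DecidableEq B]

lemma kron_conj_apply' (M : Matrix A A ℂ) (ρ : Matrix (A × B) (A × B) ℂ) (p q : A × B) :
    ((M ⊗ₖ (1 : Matrix B B ℂ)) * ρ * (M ⊗ₖ (1 : Matrix B B ℂ))ᴴ) p q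
      = (M * (Matrix.of fun a a' => ρ (a, p.2) (a', q.2)) * Mᴴ) p.1 q.1 := by
  obtain ⟨a, b⟩ := p; obtain ⟨a', b'⟩ := q
  simp only [Matrix.mul_apply, Matrix.conjTranspose_apply, kroneckerMap_apply,
    Fintype.sum_prod_type, Matrix.one_apply, Matrix.of_apply]
  simp [Finset.sum_mul, Finset.mul_sum, apply_ite, mul_comm, mul_left_comm]

lemma tensIdA_channel' {Γ : Matrix A A ℂ → Matrix A A ℂ} (hΓ : IsChannel Γ) :
    IsChannel (tensIdA Γ (A := A) (B := B)) := by
  obtain ⟨m, K, hK, hs⟩ := hΓ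
  refine ⟨m, fun i => K i ⊗ₖ (1 : Matrix B B ℂ), ?_, ?_⟩
  · intro X
    ext p q
    rw [tensIdA, Matrix.of_apply, hK, Matrix.sum_apply, Matrix.sum_apply]
    exact Finset.sum_congr rfl fun i _ => (kron_conj_apply' (K i) X p q).symm
  · have : ∀ i : Fin m, ((K i) ⊗ₖ (1 : Matrix B B ℂ))ᴴ = (K i)ᴴ ⊗ₖ (1 : Matrix B B ℂ) := by
      intro i; ext ⟨a,b⟩ ⟨a',b'⟩
      by_cases h : b = b' <;>
        simp [Matrix.conjTranspose_apply, Matrix.one_apply, h, eq_comm]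
    ext ⟨a, b⟩ ⟨a', b'⟩
    simp_rw [Matrix.sum_apply, this, ← Matrix.mul_kronecker_mul, Matrix.one_mul,
      Matrix.kroneckerMap_apply, ← Finset.sum_mul, ← Matrix.sum_apply, hs]
    by_cases ha : a = a' <;> by_cases hb : b = b' <;>
      simp [Matrix.one_apply, Prod.ext_iff, ha, hb]

lemma depol_channel' (a₀ : A) :
    IsChannel (fun X : Matrix A A ℂ => X.trace • single a₀ a₀ 1) := by
  set e := (Fintype.equivFin A).symm
  refine ⟨Fintype.card A, fun i => single a₀ (e i) 1, ?_, ?_⟩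
  · intro X
    have hct : ∀ c : A, (single a₀ c (1:ℂ))ᴴ = single c a₀ 1 := by
      intro c; ext p q
      by_cases h1 : c = p <;> by_cases h2 : a₀ = q <;>
        simp [Matrix.single, Matrix.conjTranspose_apply, h1, h2]
    have hone : ∀ c : A, single a₀ c (1:ℂ) * X * single c a₀ 1
        = single a₀ a₀ (X c c) := by
      intro c; ext p q
      by_cases h1 : a₀ = p <;> by_cases h2 : a₀ = q <;>
        simp [Matrix.mul_apply, Matrix.single, h1, h2, ite_and]
    simp_rw [hct, hone]
    rw [e.sum_comp (fun c => single a₀ a₀ (X c c))]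
    ext p q
    by_cases h1 : a₀ = p <;> by_cases h2 : a₀ = q <;>
      simp [Matrix.sum_apply, Matrix.single, Matrix.trace, Matrix.diag, h1, h2, ite_and]
  · have hct : ∀ c : A, (single a₀ c (1:ℂ))ᴴ = single c a₀ 1 := by
      intro c; ext p q
      by_cases h1 : c = p <;> by_cases h2 : a₀ = q <;>
        simp [Matrix.single, Matrix.conjTranspose_apply, h1, h2]
    simp_rw [hct, Matrix.single_mul_single_same, one_mul]
    rw [e.sum_comp (fun c => single c c (1:ℂ))]
    ext p q
    by_cases h : p = q <;>
      simp [Matrix.sum_apply, Matrix.single, Matrix.one_apply, h, ite_and]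

lemma tensIdA_depol_eq (a₀ : A) {σ σ' : Matrix (A × B) (A × B) ℂ}
    (h : trA σ = trA σ') :
    tensIdA (fun X : Matrix A A ℂ => X.trace • single a₀ a₀ 1) σ
      = tensIdA (fun X : Matrix A A ℂ => X.trace • single a₀ a₀ 1) σ' := by
  ext p q
  have hσ : (Matrix.of fun a a' => σ (a, p.2) (a', q.2)).trace = trA σ p.2 q.2 := by
    simp [Matrix.trace, Matrix.diag, trA]
  have hσ' : (Matrix.of fun a a' => σ' (a, p.2) (a', q.2)).trace = trA σ' p.2 q.2 := by
    simp [Matrix.trace, Matrix.diag, trA]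
  simp only [tensIdA, Matrix.of_apply, Matrix.smul_apply, hσ, hσ', h]

end AuxiliaryLemmas

/-- the composition of two A↛B semicausal channels is an
A↛B semicausal channel. -/
theorem stmt_4 {A B : Type*} [Fintype A] [Fintype B] [DecidableEq A] [DecidableEq B]
    [Nonempty A] [Nonempty B]
    (Λ₁ Λ₂ : Matrix (A × B) (A × B) ℂ → Matrix (A × B) (A × B) ℂ)
    (h1chan : IsChannel Λ₁) (h1 : SemicausalAtoB Λ₁)
    (h2chan : IsChannel Λ₂) (h2 : SemicausalAtoB Λ₂) :
    IsChannel (Λ₁ ∘ Λ₂) ∧ SemicausalAtoB (Λ₁ ∘ Λ₂) := by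
  refine ⟨isChannel_comp' h1chan h2chan, ?_⟩
  intro ρ hρ Γ hΓ
  obtain ⟨a₀⟩ := ‹Nonempty A›
  have hdep := depol_channel' (A := A) a₀
  have hσ : IsState (Λ₂ (tensIdA Γ ρ)) :=
    isState_channel' h2chan (isState_channel' (tensIdA_channel' hΓ) hρ)
  have hσ' : IsState (Λ₂ ρ) := isState_channel' h2chan hρ
  have htr : trA (Λ₂ (tensIdA Γ ρ)) = trA (Λ₂ ρ) := h2 ρ hρ Γ hΓ
  simp only [Function.comp_apply]
  calc trA (Λ₁ (Λ₂ (tensIdA Γ ρ)))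
      = trA (Λ₁ (tensIdA (fun X : Matrix A A ℂ => X.trace • single a₀ a₀ 1)
          (Λ₂ (tensIdA Γ ρ)))) := (h1 _ hσ _ hdep).symm
    _ = trA (Λ₁ (tensIdA (fun X : Matrix A A ℂ => X.trace • single a₀ a₀ 1)
          (Λ₂ ρ))) := by rw [tensIdA_depol_eq a₀ htr]
    _ = trA (Λ₁ (Λ₂ ρ)) := h1 _ hσ' _ hdep
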